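/- Let k be a perfect field of characteristic p complete with respect to a non-trivial non-archimedean norm, and let R = k[T^{1/p^∞}, T^{-1/p^∞}][Z]/(Z²) with R₀ the 𝒪_k-submodule with basis ϖ^{|n|}Tⁿ and ϖ^{-|n|}TⁿZ for n ∈ ℤ[1/p]. Then ϖ⁻¹Z ∉ R₀, while ϖ⁻ⁿZ ∈ R₀[T] and ϖ⁻ⁿZ ∈ R₀[T⁻¹] for all n ≥ 0. -/

import Mathlib

/-- The valuation ring `𝒪_k = {c : k | ‖c‖ ≤ 1}` of a non-archimedean normed field. -/
def valuationSubring (k : Type*) [NormedField k] [IsUltrametricDist k] : Subring k where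
  carrier := {c | ‖c‖ ≤ 1}
  one_mem' := by simp
  zero_mem' := by simp
  neg_mem' := by simp
  mul_mem' := by
    intro a b ha hb
    simp only [Set.mem_setOf_eq] at *
    calc ‖a * b‖ = ‖a‖ * ‖b‖ := norm_mul a b
      _ ≤ 1 * 1 := mul_le_mul ha hb (norm_nonneg b) zero_le_one
      _ = 1 := one_mul 1
  add_mem' := by
    intro a b ha hb
    simp only [Set.mem_setOf_eq] at *
    exact le_trans (IsUltrametricDist.norm_add_le_max a b) (max_le ha hb)

/-- The additive subgroup `ℤ[1/p] ⊆ ℚ`. -/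
def zInvSubgroup (p : ℕ) (hp : (p : ℚ) ≠ 0) : AddSubgroup ℚ where
  carrier := {q | ∃ (m : ℤ) (j : ℕ), q = m / p ^ j}
  zero_mem' := ⟨0, 0, by norm_num⟩
  add_mem' := by
    rintro a b ⟨m, j, rfl⟩ ⟨m', j', rfl⟩
    refine ⟨m * p ^ j' + m' * p ^ j, j + j', ?_⟩
    have h1 : (p : ℚ) ^ j ≠ 0 := pow_ne_zero _ hp
    have h2 : (p : ℚ) ^ j' ≠ 0 := pow_ne_zero _ hp
    push_cast
    rw [div_add_div _ _ h1 h2, pow_add]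
    ring_nf
  neg_mem' := by
    rintro a ⟨m, j, rfl⟩
    exact ⟨-m, j, by push_cast; ring⟩

private theorem aux_mul (k : Type*) [NontriviallyNormedField k] (G : Type*) [AddCommGroup G]
    (a : G) (c : k) :
    (TrivSqZeroExt.inl (AddMonoidAlgebra.single a (1:k)) : DualNumber (AddMonoidAlgebra k G)) *
      (c • TrivSqZeroExt.inr (M := AddMonoidAlgebra k G) (AddMonoidAlgebra.single (-a) 1)) =
    c • TrivSqZeroExt.inr (M := AddMonoidAlgebra k G) 1 := by
  rw [← TrivSqZeroExt.inr_smul, TrivSqZeroExt.inl_mul_inr, smul_eq_mul,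
    AddMonoidAlgebra.smul_single', AddMonoidAlgebra.single_mul_single, add_neg_cancel, mul_one,
    one_mul, ← TrivSqZeroExt.inr_smul]
  congr 1
  simp [AddMonoidAlgebra.one_def, AddMonoidAlgebra.smul_single']

private theorem aux_mul' (k : Type*) [NontriviallyNormedField k] (G : Type*) [AddCommGroup G]
    (a : G) (c : k) :
    (TrivSqZeroExt.inl (AddMonoidAlgebra.single (-a) (1:k)) : DualNumber (AddMonoidAlgebra k G)) *
      (c • TrivSqZeroExt.inr (M := AddMonoidAlgebra k G) (AddMonoidAlgebra.single a 1)) =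
    c • TrivSqZeroExt.inr (M := AddMonoidAlgebra k G) 1 := by
  have := aux_mul k G (-a) c
  rwa [neg_neg] at this

set_option maxHeartbeats 1000000 in
/-- Let `k` be a perfect field of characteristic `p`, complete for a
non-trivial non-archimedean norm, and `R = k[T^{1/p^∞}, T^{-1/p^∞}][Z]/(Z²)` (modelled
as dual numbers over the group algebra `k[ℤ[1/p]]`), with `R₀` the `𝒪_k`-submodule with
basis `ϖ^{|n|}Tⁿ` and `ϖ^{-|n|}TⁿZ` for `n ∈ ℤ[1/p]`, where `ϖ^q` is interpreted via a
compatible system `ρ : ℚ → k` of fractional powers of `ϖ = ρ 1`. Then `ϖ⁻¹Z ∉ R₀`,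
while `ϖ⁻ⁿZ ∈ R₀[T]` and `ϖ⁻ⁿZ ∈ R₀[T⁻¹]` for all `n ≥ 0`. -/
theorem perfectoid_rost_example
    (k : Type*) [NontriviallyNormedField k] [IsUltrametricDist k] [CompleteSpace k]
    (p : ℕ) [Fact p.Prime] [CharP k p] [ExpChar k p] [PerfectRing k p]
    (hp : (p : ℚ) ≠ 0)
    (ρ : ℚ → k) (hρadd : ∀ a b : ℚ, ρ (a + b) = ρ a * ρ b)
    (hρnorm : ∀ q : ℚ, ‖ρ q‖ = ‖ρ 1‖ ^ (q : ℝ))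
    (ϖ : k) (hϖ : ϖ = ρ 1) (hϖ0 : 0 < ‖ϖ‖) (hϖ1 : ‖ϖ‖ < 1)
    (R₀ : Submodule (valuationSubring k)
      (DualNumber (AddMonoidAlgebra k (zInvSubgroup p hp))))
    (hR₀ : R₀ = Submodule.span (valuationSubring k)
      ((Set.range fun n : zInvSubgroup p hp =>
          ρ |(n : ℚ)| • TrivSqZeroExt.inl (AddMonoidAlgebra.single n (1 : k))) ∪
       (Set.range fun n : zInvSubgroup p hp =>
          ρ (-|(n : ℚ)|) •
            TrivSqZeroExt.inr (M := AddMonoidAlgebra k (zInvSubgroup p hp))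
              (AddMonoidAlgebra.single n (1 : k)))))
    (Z : DualNumber (AddMonoidAlgebra k (zInvSubgroup p hp)))
    (hZ : Z = TrivSqZeroExt.inr (M := AddMonoidAlgebra k (zInvSubgroup p hp)) 1)
    (T : DualNumber (AddMonoidAlgebra k (zInvSubgroup p hp)))
    (hT : T = TrivSqZeroExt.inl
      (AddMonoidAlgebra.single (⟨1, 1, 0, by norm_num⟩ : zInvSubgroup p hp) (1 : k))) :
    ϖ⁻¹ • Z ∉ R₀ ∧
    (∀ n : ℕ, (ϖ⁻¹) ^ n • Z ∈ Subring.closure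
      ((R₀ : Set (DualNumber (AddMonoidAlgebra k (zInvSubgroup p hp)))) ∪ {T})) ∧
    (∀ n : ℕ, (ϖ⁻¹) ^ n • Z ∈ Subring.closure
      ((R₀ : Set (DualNumber (AddMonoidAlgebra k (zInvSubgroup p hp)))) ∪ {TrivSqZeroExt.inl
        (AddMonoidAlgebra.single (-(⟨1, 1, 0, by norm_num⟩ : zInvSubgroup p hp)) (1 : k))})) := by
  classical
  obtain ⟨e₀, he₀⟩ : ∃ e : zInvSubgroup p hp, e = ⟨1, 1, 0, by norm_num⟩ := ⟨_, rfl⟩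
  rw [← he₀] at hT
  -- norm of ρ 0
  have hρ0norm : ‖ρ 0‖ = 1 := by
    rw [hρnorm 0]
    norm_num
  -- ρ 0 = 1
  have hρ0 : ρ 0 = 1 := by
    have hne : ρ 0 ≠ 0 := by
      intro h
      rw [h] at hρ0norm
      simp at hρ0norm
    have h00 : ρ 0 * ρ 0 = ρ 0 * 1 := by
      rw [mul_one, ← hρadd]
      norm_num
    exact mul_left_cancel₀ hne h00
  -- ρ of naturals
  have hρn : ∀ n : ℕ, ρ n = ϖ ^ n := by
    intro n
    induction n with
    | zero => simpa using hρ0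
    | succ m ih =>
      push_cast
      rw [hρadd, ih, ← hϖ, pow_succ]
  -- ρ of negated naturals
  have hρneg : ∀ n : ℕ, ρ (-(n : ℚ)) = ϖ⁻¹ ^ n := by
    intro n
    have h1 : ϖ ^ n * ρ (-(n : ℚ)) = 1 := by
      rw [← hρn n, ← hρadd]
      simpa using hρ0
    rw [inv_pow]
    exact (inv_eq_of_mul_eq_one_right h1).symm
  -- coercion of multiples of e₀
  have hcoep : ∀ n : ℕ, ((n • e₀ : zInvSubgroup p hp) : ℚ) = n := by
    intro n
    push_cast
    simp [he₀]
  have hcoen : ∀ n : ℕ, ((-(n • e₀) : zInvSubgroup p hp) : ℚ) = -(n : ℚ) := by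
    intro n
    push_cast [hcoep n]
    ring
  refine ⟨?_, ?_, ?_⟩
  · -- part 1
    intro hmem
    rw [hR₀] at hmem
    have key : ∀ x, x ∈ Submodule.span (valuationSubring k)
        ((Set.range fun m : zInvSubgroup p hp =>
            ρ |(m : ℚ)| • TrivSqZeroExt.inl (AddMonoidAlgebra.single m (1 : k))) ∪
         (Set.range fun m : zInvSubgroup p hp =>
            ρ (-|(m : ℚ)|) •
              TrivSqZeroExt.inr (M := AddMonoidAlgebra k (zInvSubgroup p hp))
                (AddMonoidAlgebra.single m (1 : k)))) →
        ‖(TrivSqZeroExt.snd x).coeff 0‖ ≤ 1 := by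
      intro x hx
      induction hx using Submodule.span_induction with
      | mem x hx =>
        rcases hx with ⟨m, rfl⟩ | ⟨m, rfl⟩
        · simp [TrivSqZeroExt.snd_smul, TrivSqZeroExt.snd_inl]
        · rw [TrivSqZeroExt.snd_smul, TrivSqZeroExt.snd_inr, AddMonoidAlgebra.coeff_smul,
            Finsupp.smul_apply, smul_eq_mul, AddMonoidAlgebra.coeff_single, Finsupp.single_apply]
          by_cases hm : m = 0
          · subst hm
            simp [hρ0norm]
          · rw [if_neg hm, mul_zero, norm_zero]
            exact zero_le_one
      | zero => simp
      | add x y hx hy ihx ihy =>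
        rw [TrivSqZeroExt.snd_add, AddMonoidAlgebra.coeff_add, Finsupp.add_apply]
        exact le_trans (IsUltrametricDist.norm_add_le_max _ _) (max_le ihx ihy)
      | smul c x hx ih =>
        change ‖((c : k) • x).snd.coeff 0‖ ≤ 1
        rw [TrivSqZeroExt.snd_smul, AddMonoidAlgebra.coeff_smul, Finsupp.smul_apply, smul_eq_mul, norm_mul]
        have hc : ‖(c : k)‖ ≤ 1 := c.2
        calc ‖(c : k)‖ * ‖(TrivSqZeroExt.snd x).coeff 0‖ ≤ 1 * 1 :=
              mul_le_mul hc ih (norm_nonneg _) zero_le_one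
          _ = 1 := one_mul 1
    have hbound := key _ hmem
    rw [hZ, TrivSqZeroExt.snd_smul, TrivSqZeroExt.snd_inr, AddMonoidAlgebra.coeff_smul,
      Finsupp.smul_apply, smul_eq_mul,
      AddMonoidAlgebra.one_def, AddMonoidAlgebra.coeff_single, Finsupp.single_eq_same, mul_one, norm_inv] at hbound
    exact absurd hbound (not_le.2 ((one_lt_inv₀ hϖ0).2 hϖ1))
  · -- part 2
    intro n
    have hg : (ρ (-|((-(n • e₀) : zInvSubgroup p hp) : ℚ)|) •
        TrivSqZeroExt.inr (M := AddMonoidAlgebra k (zInvSubgroup p hp))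
          (AddMonoidAlgebra.single (-(n • e₀)) (1 : k))) ∈ R₀ := by
      rw [hR₀]
      exact Submodule.subset_span (Or.inr ⟨-(n • e₀), rfl⟩)
    have hmemT : T ∈ Subring.closure
        ((R₀ : Set (DualNumber (AddMonoidAlgebra k (zInvSubgroup p hp)))) ∪ {T}) :=
      Subring.subset_closure (Or.inr rfl)
    have hprod := mul_mem (pow_mem hmemT n) (Subring.subset_closure (Or.inl hg))
    have heq : (ϖ⁻¹) ^ n • Z = T ^ n * (ρ (-|((-(n • e₀) : zInvSubgroup p hp) : ℚ)|) •
        TrivSqZeroExt.inr (M := AddMonoidAlgebra k (zInvSubgroup p hp))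
          (AddMonoidAlgebra.single (-(n • e₀)) (1 : k))) := by
      rw [hT, hZ, TrivSqZeroExt.inl_pow, AddMonoidAlgebra.single_pow, one_pow, aux_mul]
      congr 1
      rw [hcoen n, abs_neg, Nat.abs_cast, hρneg n]
    rw [heq]
    exact hprod
  · -- part 3
    intro n
    rw [← he₀]
    have hg : (ρ (-|((n • e₀ : zInvSubgroup p hp) : ℚ)|) •
        TrivSqZeroExt.inr (M := AddMonoidAlgebra k (zInvSubgroup p hp))
          (AddMonoidAlgebra.single (n • e₀) (1 : k))) ∈ R₀ := by
      rw [hR₀]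
      exact Submodule.subset_span (Or.inr ⟨n • e₀, rfl⟩)
    have hmemT : (TrivSqZeroExt.inl (AddMonoidAlgebra.single (-e₀) (1 : k)) :
        DualNumber (AddMonoidAlgebra k (zInvSubgroup p hp))) ∈ Subring.closure
        ((R₀ : Set (DualNumber (AddMonoidAlgebra k (zInvSubgroup p hp)))) ∪
          {TrivSqZeroExt.inl (AddMonoidAlgebra.single (-e₀) (1 : k))}) :=
      Subring.subset_closure (Or.inr rfl)
    have hg' : (ρ (-|((n • e₀ : zInvSubgroup p hp) : ℚ)|) •
        TrivSqZeroExt.inr (M := AddMonoidAlgebra k (zInvSubgroup p hp))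
          (AddMonoidAlgebra.single (n • e₀) (1 : k))) ∈
        ((R₀ : Set (DualNumber (AddMonoidAlgebra k (zInvSubgroup p hp)))) ∪
          {TrivSqZeroExt.inl (AddMonoidAlgebra.single (-e₀) (1 : k))}) := Or.inl hg
    have hprod := mul_mem (pow_mem hmemT n) (Subring.subset_closure hg')
    have heq : (ϖ⁻¹) ^ n • Z =
        (TrivSqZeroExt.inl (AddMonoidAlgebra.single (-e₀) (1 : k)) :
          DualNumber (AddMonoidAlgebra k (zInvSubgroup p hp))) ^ n *
        (ρ (-|((n • e₀ : zInvSubgroup p hp) : ℚ)|) •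
          TrivSqZeroExt.inr (M := AddMonoidAlgebra k (zInvSubgroup p hp))
            (AddMonoidAlgebra.single (n • e₀) (1 : k))) := by
      rw [hZ, TrivSqZeroExt.inl_pow, AddMonoidAlgebra.single_pow, one_pow, smul_neg, aux_mul']
      congr 1
      rw [hcoep n, Nat.abs_cast, hρneg n]
    rw [heq]
    exact hprod
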